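/- Let G = (S,E) be a Path-Complete graph on finite nonempty node set S with labels {1,…,M}, let A_1,…,A_M be maps on ℝⁿ, and let (V_s)_{s∈S} satisfy V_d(A_σ x) ≤ V_s(x) for all x and all (s,d,σ) ∈ E. Let 𝒮 ⊆ 2^S \ {∅} be the collection of all nonempty subsets of S reachable from the full set S by iterating the transitions δ_σ(P) = {q : ∃ p ∈ P, (p,q,σ) ∈ E}. Then V*(x) := min_{Q∈𝒮} max_{s∈Q} V_s(x) satisfies V*(A_σ x) ≤ V*(x) for all x ∈ ℝⁿ and all σ ∈ {1,…,M}. -/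

import Mathlib

open scoped Classical

/-- A labeled graph (edges `E s d σ`) is Path-Complete if every finite word
over the labels is carried by some path in the graph. -/
def PathComplete {S : Type*} {M : ℕ} (E : S → S → Fin M → Prop) : Prop :=
  ∀ w : List (Fin M), ∃ path : Fin (w.length + 1) → S,
    ∀ i : Fin w.length, E (path i.castSucc) (path i.succ) (w.get i)

/-- The observer transition: image of a finset of nodes under the σ-labeled edges. -/
noncomputable def obsDelta {S : Type*} [Fintype S] {M : ℕ}
    (E : S → S → Fin M → Prop) (σ : Fin M) (P : Finset S) : Finset S :=
  Finset.univ.filter (fun q => ∃ p ∈ P, E p q σ)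

/-- The collection of all nonempty subsets of `S` reachable from the full set
by iterating the observer transitions. -/
noncomputable def obsFamily {S : Type*} [Fintype S] {M : ℕ}
    (E : S → S → Fin M → Prop) : Finset (Finset S) :=
  Finset.univ.filter (fun Q =>
    (∃ w : List (Fin M), Q = w.foldl (fun P σ => obsDelta E σ P) Finset.univ)
      ∧ Q.Nonempty)

lemma path_mem_foldl {S : Type*} [Fintype S] {M : ℕ}
    (E : S → S → Fin M → Prop) :
    ∀ (w : List (Fin M)) (P : Finset S) (path : Fin (w.length + 1) → S),
      path 0 ∈ P →
      (∀ i : Fin w.length, E (path i.castSucc) (path i.succ) (w.get i)) →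
      path (Fin.last w.length) ∈ w.foldl (fun P σ => obsDelta E σ P) P := by
  intro w
  induction w with
  | nil => intro P path h0 _; simpa [Fin.last] using h0
  | cons σ w ih =>
    intro P path h0 hE
    have h1 : path 1 ∈ obsDelta E σ P := by
      simp only [obsDelta, Finset.mem_filter, Finset.mem_univ, true_and]
      refine ⟨path 0, h0, ?_⟩
      have := hE ⟨0, Nat.succ_pos _⟩
      simpa using this
    have := ih (obsDelta E σ P) (fun i => path i.succ) (by simpa using h1)
      (by
        intro i
        have := hE i.succ
        simp only [Fin.succ_castSucc]
        simpa using this)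
    simpa [List.foldl_cons, Fin.succ_last] using this

lemma foldl_nonempty {S : Type*} [Fintype S] [Nonempty S] {M : ℕ}
    (E : S → S → Fin M → Prop) (hPC : PathComplete E) (w : List (Fin M)) :
    (w.foldl (fun P σ => obsDelta E σ P) Finset.univ).Nonempty := by
  obtain ⟨path, hpath⟩ := hPC w
  exact ⟨path (Fin.last w.length),
    path_mem_foldl E w Finset.univ path (Finset.mem_univ _) hpath⟩

lemma obsDelta_mem_obsFamily {S : Type*} [Fintype S] [Nonempty S] {M : ℕ}
    (E : S → S → Fin M → Prop) (hPC : PathComplete E) {Q : Finset S}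
    (hQ : Q ∈ obsFamily E) (σ : Fin M) : obsDelta E σ Q ∈ obsFamily E := by
  obtain ⟨⟨w, hw⟩, -⟩ := (Finset.mem_filter.mp hQ).2
  have hfold : obsDelta E σ Q
      = (w ++ [σ]).foldl (fun P σ => obsDelta E σ P) Finset.univ := by
    simp [List.foldl_append, hw]
  refine Finset.mem_filter.mpr ⟨Finset.mem_univ _, ⟨w ++ [σ], hfold⟩, ?_⟩
  rw [hfold]; exact foldl_nonempty E hPC _

theorem stmt10 {n M : ℕ} {S : Type*} [Fintype S] [Nonempty S]
    (E : S → S → Fin M → Prop) (hPC : PathComplete E)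
    (A : Fin M → (Fin n → ℝ) → (Fin n → ℝ))
    (V : S → (Fin n → ℝ) → ℝ)
    (hV : ∀ (s d : S) (σ : Fin M), E s d σ → ∀ x, V d (A σ x) ≤ V s x)
    (hfam : (obsFamily E).attach.Nonempty) :
    ∀ (σ : Fin M) (x : Fin n → ℝ),
      (obsFamily E).attach.inf' hfam
          (fun Q => Q.1.sup' ((Finset.mem_filter.mp Q.2).2.2)
            (fun s => V s (A σ x))) ≤
        (obsFamily E).attach.inf' hfam
          (fun Q => Q.1.sup' ((Finset.mem_filter.mp Q.2).2.2)
            (fun s => V s x)) := by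
  intro σ x
  apply Finset.le_inf'
  rintro ⟨Q, hQ⟩ -
  have hQ' : obsDelta E σ Q ∈ obsFamily E := obsDelta_mem_obsFamily E hPC hQ σ
  refine le_trans (Finset.inf'_le _ (Finset.mem_attach _ ⟨_, hQ'⟩)) ?_
  apply Finset.sup'_le
  intro d hd
  simp only [obsDelta, Finset.mem_filter, Finset.mem_univ, true_and] at hd
  obtain ⟨p, hp, hE⟩ := hd
  exact le_trans (hV p d σ hE x) (Finset.le_sup' (fun s => V s x) hp)
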